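/- Let D be a Ferrers diagram of order n, let 2 ≤ d ≤ n and j ∈ {0,…,d−1}, and assume (D,d) is MDS-constructible and j-Singleton. Then: (1) D ∩ S_{n,d,j} = D ∩ T_{n,d,j}; (2) {i ∈ [n−d+1] : |D ∩ Δ_i^n| ≥ d} = {i ∈ [n−d+1] : D ∩ Δ_i^n ∩ S_{n,d,j} ≠ ∅}; (3) if i ∈ [n−d+1] and D ∩ Δ_i^n ∩ S_{n,d,j} ≠ ∅, then Δ_i^n ∩ L_{n,d,j} ⊆ D ∩ Δ_i^n. -/

import Mathlib

/-- A Ferrers diagram of order `n`, given by its column heights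
`c 0 ≤ c 1 ≤ … ≤ c (n-1) ≤ n` (so `c j` is the number of dots in the (j+1)-st column). -/
def IsFerrersDiagram (n : ℕ) (c : Fin n → ℕ) : Prop :=
  Monotone c ∧ ∀ i, c i ≤ n

/-- Extension of the column-height function to `ℕ`, by zero. -/
def colExt (n : ℕ) (c : Fin n → ℕ) : ℕ → ℕ :=
  fun k => if h : k < n then c ⟨k, h⟩ else 0

/-- `ν_j(D,d) = Σ_{i=1}^{n-j} max{0, c_i - d + 1 + j}` (truncated subtraction gives the max). -/
def nuJ (n d j : ℕ) (c : Fin n → ℕ) : ℕ :=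
  ∑ i ∈ Finset.range (n - j), (colExt n c i + 1 + j - d)

/-- `ν_min(D,d) = min{ν_j(D,d) : 0 ≤ j ≤ d-1}`. -/
noncomputable def nuMin (n d : ℕ) (c : Fin n → ℕ) : ℕ :=
  sInf {k | ∃ j < d, k = nuJ n d j c}

/-- A Ferrers diagram is monotone if `c (i+1) > c i` whenever `0 < c i < n`. -/
def DiagMonotone (n : ℕ) (c : Fin n → ℕ) : Prop :=
  ∀ i : Fin n, ∀ hi : (i : ℕ) + 1 < n, 0 < c i → c i < n → c i < c ⟨(i : ℕ) + 1, hi⟩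

/-- A Ferrers diagram is convex if `c (i+1) - c i ≤ 1` for all `i`. -/
def DiagConvex (n : ℕ) (c : Fin n → ℕ) : Prop :=
  ∀ i : Fin n, ∀ hi : (i : ℕ) + 1 < n, c ⟨(i : ℕ) + 1, hi⟩ ≤ c i + 1

/-- A Ferrers diagram is strictly monotone if `c (i+1) > c i` whenever `c i > 0`. -/
def DiagStrictlyMonotone (n : ℕ) (c : Fin n → ℕ) : Prop :=
  ∀ i : Fin n, ∀ hi : (i : ℕ) + 1 < n, 0 < c i → c i < c ⟨(i : ℕ) + 1, hi⟩

/-- A Ferrers diagram is initially convex if `c 1 ≤ 1` and `c (i+1) - c i ≤ 1` for all `i`. -/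
def DiagInitiallyConvex (n : ℕ) (c : Fin n → ℕ) : Prop :=
  (∀ h : 0 < n, c ⟨0, h⟩ ≤ 1) ∧ DiagConvex n c

/-- `h` is an admissible `p`-height for the Ferrers diagram `c`: `p^h ∣ n`, `p^h ∣ c i` for
all `i`, and `c (n-r) = c (n-s)` (1-indexed) whenever `r, s` lie in the same block
`{Q p^h, …, (Q+1) p^h - 1}`. -/
def HeightOK (p n h : ℕ) (c : Fin n → ℕ) : Prop :=
  p ^ h ∣ n ∧ (∀ i, p ^ h ∣ c i) ∧
    ∀ r s : Fin n, (r : ℕ) / p ^ h = (s : ℕ) / p ^ h →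
      c ⟨n - 1 - (r : ℕ), by have := r.isLt; omega⟩ =
        c ⟨n - 1 - (s : ℕ), by have := s.isLt; omega⟩

/-- The `p`-height of a Ferrers diagram: the largest admissible `h`. -/
noncomputable def pHeight (p n : ℕ) (c : Fin n → ℕ) : ℕ :=
  sSup {h | HeightOK p n h c}

/-- The `p`-contraction of a Ferrers diagram: `c'_i = c_{p^h i} / p^h` (1-indexed),
a diagram of order `n / p^h`, where `h` is the `p`-height. -/
noncomputable def pContraction (p n : ℕ) (c : Fin n → ℕ) :
    Fin (n / p ^ pHeight p n c) → ℕ :=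
  fun i => colExt n c (p ^ pHeight p n c * ((i : ℕ) + 1) - 1) / p ^ pHeight p n c

/-- A Ferrers diagram is `p`-monotone if its `p`-contraction is monotone. -/
def IsPMonotone (p n : ℕ) (c : Fin n → ℕ) : Prop :=
  DiagMonotone (n / p ^ pHeight p n c) (pContraction p n c)

/-- A Ferrers diagram is `p`-convex if its `p`-contraction is convex. -/
def IsPConvex (p n : ℕ) (c : Fin n → ℕ) : Prop :=
  DiagConvex (n / p ^ pHeight p n c) (pContraction p n c)

/-- A Ferrers diagram is strictly `p`-monotone if its `p`-contraction is strictly monotone. -/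
def IsStrictlyPMonotone (p n : ℕ) (c : Fin n → ℕ) : Prop :=
  DiagStrictlyMonotone (n / p ^ pHeight p n c) (pContraction p n c)

/-- A Ferrers diagram is initially `p`-convex if its `p`-contraction is initially convex. -/
def IsInitiallyPConvex (p n : ℕ) (c : Fin n → ℕ) : Prop :=
  DiagInitiallyConvex (n / p ^ pHeight p n c) (pContraction p n c)

/-- The adjoint Ferrers diagram: column `j+1` of `D^⊤` has `#{i : c i ≥ n - j}` dots. -/
def adjointDiag (n : ℕ) (c : Fin n → ℕ) : Fin n → ℕ :=
  fun j => (Finset.univ.filter (fun i : Fin n => n - (j : ℕ) ≤ c i)).card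

/-- `|D ∩ Δ_{i+1}^n|`: the number of dots of `D` on the (i+1)-st diagonal (0-indexed `i`). -/
def diagDots (n : ℕ) (c : Fin n → ℕ) (i : ℕ) : ℕ :=
  ((Finset.range n).filter (fun r => r + i < n ∧ r < colExt n c (r + i))).card

/-- The pair `(D, d)` is MDS-constructible if
`ν_min(D,d) = Σ_{i=1}^n max{0, |D ∩ Δ_i^n| - d + 1}`. -/
def IsMDSConstructibleP (n d : ℕ) (c : Fin n → ℕ) : Prop :=
  nuMin n d c = ∑ i ∈ Finset.range n, (diagDots n c i + 1 - d)

/-- The dots of `D ∩ S_{n,d,j}` as pairs `(row, col)` (0-indexed). -/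
def mySet (n d j : ℕ) (c : Fin n → ℕ) : Finset (ℕ × ℕ) :=
  (Finset.range n ×ˢ Finset.range n).filter
    fun p => p.1 < colExt n c p.2 ∧ d - j ≤ p.1 + 1 ∧ p.2 + 1 ≤ n - j

/-- Rows of dots of `D` on the diagonal of offset `k`. -/
def myD (n k : ℕ) (c : Fin n → ℕ) : Finset ℕ :=
  (Finset.range n).filter fun r => r + k < n ∧ r < colExt n c (r + k)

/-- Rows of dots of `D ∩ S` on the diagonal of offset `k`. -/
def myDS (n d j k : ℕ) (c : Fin n → ℕ) : Finset ℕ :=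
  (Finset.range n).filter
    fun r => r + k < n ∧ r < colExt n c (r + k) ∧ d - j ≤ r + 1 ∧ r + k + 1 ≤ n - j

/-- Rows of dots of `D ∩ L` (complement of `S`) on the diagonal of offset `k`. -/
def myBad (n d j k : ℕ) (c : Fin n → ℕ) : Finset ℕ :=
  (Finset.range n).filter
    fun r => r + k < n ∧ r < colExt n c (r + k) ∧ ¬(d - j ≤ r + 1 ∧ r + k + 1 ≤ n - j)

/-- Rows of points of `Δ_k ∩ L`. -/
def myL (n d j k : ℕ) : Finset ℕ :=
  (Finset.range n).filter fun r => r + k < n ∧ ¬(d - j ≤ r + 1 ∧ r + k + 1 ≤ n - j)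

lemma colExt_fin {n : ℕ} (c : Fin n → ℕ) (col : Fin n) : colExt n c (col : ℕ) = c col := by
  simp [colExt, col.isLt]

lemma myD_split (n d j k : ℕ) (c : Fin n → ℕ) :
    (myD n k c).card = (myDS n d j k c).card + (myBad n d j k c).card := by
  have h := Finset.card_filter_add_card_filter_not
    (s := myD n k c) (p := fun r => d - j ≤ r + 1 ∧ r + k + 1 ≤ n - j)
  have h1 : (myD n k c).filter (fun r => d - j ≤ r + 1 ∧ r + k + 1 ≤ n - j)
      = myDS n d j k c := by
    ext r; simp [myD, myDS, Finset.mem_filter]; tauto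
  have h2 : (myD n k c).filter (fun r => ¬(d - j ≤ r + 1 ∧ r + k + 1 ≤ n - j))
      = myBad n d j k c := by
    ext r; simp [myD, myBad, Finset.mem_filter]; tauto
  rw [h1, h2] at h
  omega

lemma myBad_subset (n d j k : ℕ) (c : Fin n → ℕ) : myBad n d j k c ⊆ myL n d j k := by
  intro r hr
  simp [myBad] at hr
  simp [myL]
  tauto

lemma myL_card (n d j k : ℕ) (hj : j < d) : (myL n d j k).card ≤ d - 1 := by
  have hsub : myL n d j k ⊆ Finset.range (d - 1 - j) ∪ Finset.Ico (n - j - k) (n - k) := by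
    intro r hr
    simp [myL] at hr
    simp [Finset.mem_union, Finset.mem_Ico]
    omega
  have := Finset.card_le_card hsub
  have := Finset.card_union_le (Finset.range (d - 1 - j)) (Finset.Ico (n - j - k) (n - k))
  rw [Finset.card_range, Nat.card_Ico] at this
  omega

lemma mySet_card (n d j : ℕ) (c : Fin n → ℕ) (hj : j < d) (hc : ∀ i, c i ≤ n) :
    (mySet n d j c).card = nuJ n d j c := by
  have hcx : ∀ x, colExt n c x ≤ n := by
    intro x; unfold colExt; split
    · exact hc _
    · exact Nat.zero_le n
  rw [Finset.card_eq_sum_card_fiberwise (f := Prod.snd) (t := Finset.range n)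
    (by intro p hp; simp [mySet] at hp; simp [hp.1.2])]
  have hfib : ∀ col ∈ Finset.range n,
      ((mySet n d j c).filter fun p => p.2 = col).card
        = if col + 1 ≤ n - j then colExt n c col + 1 + j - d else 0 := by
    intro col _
    by_cases hcol : col + 1 ≤ n - j
    · rw [if_pos hcol]
      have : (mySet n d j c).filter (fun p => p.2 = col)
          = (Finset.Ico (d - j - 1) (colExt n c col)).map
              ⟨fun r => (r, col), fun a b h => congrArg Prod.fst h⟩ := by
        ext ⟨a, b⟩
        simp only [mySet, Finset.mem_filter, Finset.mem_map, Finset.mem_product,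
          Finset.mem_range, Finset.mem_Ico, Function.Embedding.coeFn_mk, Prod.mk.injEq]
        constructor
        · rintro ⟨⟨⟨ha, hb⟩, hlt, hS1, hS2⟩, hbc⟩
          subst hbc
          exact ⟨a, ⟨by omega, hlt⟩, rfl⟩
        · rintro ⟨r, ⟨hr1, hr2⟩, rfl, rfl⟩
          have hcn := hcx col
          refine ⟨⟨⟨by omega, by omega⟩, hr2, by omega, hcol⟩, rfl⟩
      rw [this, Finset.card_map, Nat.card_Ico]
      omega
    · rw [if_neg hcol]
      rw [Finset.card_eq_zero, Finset.eq_empty_iff_forall_notMem]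
      rintro ⟨a, b⟩ hab
      simp [mySet] at hab
      omega
  rw [Finset.sum_congr rfl hfib]
  rw [nuJ]
  rw [← Finset.sum_subset (Finset.range_subset_range.2 (Nat.sub_le n j))
    (by intro x hx hx'; simp at hx hx'; rw [if_neg (by omega)])]
  refine Finset.sum_congr rfl fun x hx => ?_
  simp at hx
  rw [if_pos (by omega)]

lemma mySet_split (n d j : ℕ) (c : Fin n → ℕ) :
    (mySet n d j c).card
      = (∑ k ∈ Finset.range n, (myDS n d j k c).card)
        + ((mySet n d j c).filter fun p => p.2 < p.1).card := by
  have h := Finset.card_filter_add_card_filter_not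
    (s := mySet n d j c) (p := fun p => p.1 ≤ p.2)
  have h2 : (mySet n d j c).filter (fun p => ¬ p.1 ≤ p.2)
      = (mySet n d j c).filter fun p => p.2 < p.1 := by
    ext p; simp only [Finset.mem_filter, not_le]
  rw [h2] at h
  have hup : ((mySet n d j c).filter fun p => p.1 ≤ p.2).card
      = ∑ k ∈ Finset.range n, (myDS n d j k c).card := by
    rw [Finset.card_eq_sum_card_fiberwise (f := fun p => p.2 - p.1) (t := Finset.range n)
      (by rintro ⟨a, b⟩ hp; simp [mySet] at hp ⊢; omega)]
    refine Finset.sum_congr rfl fun k _ => ?_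
    have : ((mySet n d j c).filter (fun p => p.1 ≤ p.2)).filter (fun p => p.2 - p.1 = k)
        = (myDS n d j k c).map ⟨fun r => (r, r + k), fun a b h => congrArg Prod.fst h⟩ := by
      ext ⟨a, b⟩
      simp only [mySet, myDS, Finset.mem_filter, Finset.mem_map, Finset.mem_product,
        Finset.mem_range, Function.Embedding.coeFn_mk, Prod.mk.injEq]
      constructor
      · rintro ⟨⟨⟨⟨ha, hb⟩, hlt, hS1, hS2⟩, hle⟩, hk⟩
        have hba : b = a + k := by omega
        subst hba
        exact ⟨a, ⟨ha, hb, hlt, hS1, hS2⟩, rfl⟩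
      · rintro ⟨r, ⟨hr, hrk, hlt, hS1, hS2⟩, rfl, rfl⟩
        exact ⟨⟨⟨⟨hr, hrk⟩, hlt, hS1, hS2⟩, by omega⟩, by omega⟩
    rw [this, Finset.card_map]
  omega

/-- if `(D, d)` is MDS-constructible and `j`-Singleton then
(1) `D ∩ S_{n,d,j} = D ∩ T_{n,d,j}`;
(2) `{i ∈ [n-d+1] : |D ∩ Δ_i^n| ≥ d} = {i ∈ [n-d+1] : D ∩ Δ_i^n ∩ S_{n,d,j} ≠ ∅}`;
(3) if `i ∈ [n-d+1]` and `D ∩ Δ_i^n ∩ S_{n,d,j} ≠ ∅`, then `Δ_i^n ∩ L_{n,d,j} ⊆ D ∩ Δ_i^n`.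
Here (0-indexed) `(r, col) ∈ D` iff `r < c col`; `(r, col) ∈ S_{n,d,j}` iff
`d - j ≤ r + 1` and `col + 1 ≤ n - j`; `(r, col) ∈ T_n` iff `r ≤ col`; and `(r, col)`
lies on the diagonal `Δ_{i+1}^n` iff `col = r + i` (0-indexed diagonal index `i`). -/
theorem statement18 {n d j : ℕ} (hn : 1 ≤ n) (hd2 : 2 ≤ d) (hdn : d ≤ n) (hj : j < d)
    (c : Fin n → ℕ) (hferr : IsFerrersDiagram n c)
    (hmds : IsMDSConstructibleP n d c)
    (hsing : nuMin n d c = nuJ n d j c) :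
    (∀ r col : Fin n,
      (((r : ℕ) < c col ∧ d - j ≤ (r : ℕ) + 1 ∧ (col : ℕ) + 1 ≤ n - j) ↔
        ((r : ℕ) < c col ∧ (d - j ≤ (r : ℕ) + 1 ∧ (col : ℕ) + 1 ≤ n - j) ∧
          (r : ℕ) ≤ (col : ℕ)))) ∧
    (∀ i : ℕ, i < n - d + 1 →
      (d ≤ diagDots n c i ↔
        ∃ r col : Fin n, (col : ℕ) = (r : ℕ) + i ∧ (r : ℕ) < c col ∧
          d - j ≤ (r : ℕ) + 1 ∧ (col : ℕ) + 1 ≤ n - j)) ∧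
    (∀ i : ℕ, i < n - d + 1 →
      (∃ r col : Fin n, (col : ℕ) = (r : ℕ) + i ∧ (r : ℕ) < c col ∧
          d - j ≤ (r : ℕ) + 1 ∧ (col : ℕ) + 1 ≤ n - j) →
      ∀ r col : Fin n, (col : ℕ) = (r : ℕ) + i →
        ¬(d - j ≤ (r : ℕ) + 1 ∧ (col : ℕ) + 1 ≤ n - j) → (r : ℕ) < c col) := by
  classical
  obtain ⟨hmono, hcle⟩ := hferr
  have hdd : ∀ i : ℕ, diagDots n c i = (myD n i c).card := fun i => rfl
  have key : (∑ k ∈ Finset.range n, (myDS n d j k c).card)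
      + ((mySet n d j c).filter fun p => p.2 < p.1).card
      = ∑ i ∈ Finset.range n, ((myD n i c).card + 1 - d) := by
    rw [← mySet_split, mySet_card n d j c hj hcle, ← hsing, hmds]
    exact Finset.sum_congr rfl fun i _ => by rw [hdd]
  have hterm_le : ∀ k ∈ Finset.range n, (myD n k c).card + 1 - d ≤ (myDS n d j k c).card := by
    intro k _
    have h1 := myD_split n d j k c
    have h2 := Finset.card_le_card (myBad_subset n d j k c)
    have h3 := myL_card n d j k hj
    omega
  have hsum_le := Finset.sum_le_sum hterm_le
  have hlow0 : ((mySet n d j c).filter fun p => p.2 < p.1).card = 0 := by omega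
  have hsum_eq : ∑ k ∈ Finset.range n, ((myD n k c).card + 1 - d)
      = ∑ k ∈ Finset.range n, (myDS n d j k c).card := by omega
  have hteq := (Finset.sum_eq_sum_iff_of_le hterm_le).1 hsum_eq
  have hlowE : ((mySet n d j c).filter fun p => p.2 < p.1) = ∅ :=
    Finset.card_eq_zero.1 hlow0
  have hwitDS : ∀ i : ℕ, i < n →
      (∃ r col : Fin n, (col : ℕ) = (r : ℕ) + i ∧ (r : ℕ) < c col ∧
          d - j ≤ (r : ℕ) + 1 ∧ (col : ℕ) + 1 ≤ n - j) →
      1 ≤ (myDS n d j i c).card := by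
    rintro i hi ⟨r, col, hcol, hlt, hS1, hS2⟩
    have hmem : (r : ℕ) ∈ myDS n d j i c := by
      have hcE : colExt n c ((r : ℕ) + i) = c col := by
        rw [← hcol]; exact colExt_fin c col
      simp only [myDS, Finset.mem_filter, Finset.mem_range]
      refine ⟨r.isLt, by rw [← hcol]; exact col.isLt, by rw [hcE]; exact hlt, hS1, by omega⟩
    exact Finset.card_pos.2 ⟨_, hmem⟩
  refine ⟨?_, ?_, ?_⟩
  · intro r col
    constructor
    · rintro ⟨h1, h2, h3⟩
      refine ⟨h1, ⟨h2, h3⟩, ?_⟩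
      by_contra hgt
      push_neg at hgt
      have hmem : ((r : ℕ), (col : ℕ)) ∈ (mySet n d j c).filter fun p => p.2 < p.1 := by
        simp only [mySet, Finset.mem_filter, Finset.mem_product, Finset.mem_range]
        exact ⟨⟨⟨r.isLt, col.isLt⟩, by rw [colExt_fin]; exact h1, h2, h3⟩, hgt⟩
      rw [hlowE] at hmem
      exact absurd hmem (Finset.notMem_empty _)
    · tauto
  · intro i hi
    have hin : i < n := by omega
    have hteqi := hteq i (Finset.mem_range.2 hin)
    constructor
    · intro hdle
      rw [hdd] at hdle
      have : 1 ≤ (myDS n d j i c).card := by omega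
      obtain ⟨r, hr⟩ := Finset.card_pos.1 this
      simp only [myDS, Finset.mem_filter, Finset.mem_range] at hr
      obtain ⟨hrn, hrk, hlt, hS1, hS2⟩ := hr
      refine ⟨⟨r, hrn⟩, ⟨r + i, hrk⟩, rfl, ?_, hS1, ?_⟩
      · show r < c ⟨r + i, hrk⟩
        rw [← colExt_fin c ⟨r + i, hrk⟩]; exact hlt
      · simpa using hS2
    · intro hex
      have := hwitDS i hin hex
      rw [hdd]
      omega
  · intro i hi hex r col hcol hnS
    have hin : i < n := by omega
    have hteqi := hteq i (Finset.mem_range.2 hin)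
    have hDS1 := hwitDS i hin hex
    have hBadcard : (myBad n d j i c).card = d - 1 := by
      have h1 := myD_split n d j i c
      have h2 := Finset.card_le_card (myBad_subset n d j i c)
      have h3 := myL_card n d j i hj
      omega
    have hLB : myBad n d j i c = myL n d j i := by
      apply Finset.eq_of_subset_of_card_le (myBad_subset n d j i c)
      have := myL_card n d j i hj
      omega
    have hrL : (r : ℕ) ∈ myL n d j i := by
      have hcn := col.isLt
      simp only [myL, Finset.mem_filter, Finset.mem_range]
      exact ⟨r.isLt, by omega, by omega⟩
    rw [← hLB] at hrL
    simp only [myBad, Finset.mem_filter, Finset.mem_range] at hrL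
    have := hrL.2.2.1
    rwa [← hcol, colExt_fin] at this
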